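/- Let F = [[K, M],[L, C−I]] satisfy the form inequality and suppose additionally that equality holds: 2 Re⟨ξ, Fξ⟩ + ‖ΔFξ‖² = 0 for all ξ in the domain. Then C is isometric on its domain, ‖Lu‖² + 2 Re⟨u, Ku⟩ = 0 for all u ∈ D₀, and M* ⊃ −C*L (i.e. M*u = −C*Lu for all u ∈ D₀). -/

import Mathlib

open scoped InnerProductSpace

/-- if `F = [[K, M],[L, C−I]]` satisfies the form *equality*
`2Re⟨ξ, Fξ⟩ + ‖ΔFξ‖² = 0` on `D₀ ⊕ (D ⊗ D_k)`, then `C` is isometric on its domain,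
`‖Lu‖² + 2Re⟨u, Ku⟩ = 0` for all `u ∈ D₀`, and `M* ⊃ −C̄*L`, i.e. every `u ∈ D₀` lies in
`Dom M*` with `M*u = −C̄*(Lu)`, where `C̄` is the contractive continuous extension of `C`. -/
theorem block_form_equality_isometric {h K2 : Type*}
    [NormedAddCommGroup h] [InnerProductSpace ℂ h] [CompleteSpace h]
    [NormedAddCommGroup K2] [InnerProductSpace ℂ K2] [CompleteSpace K2]
    (D0 : Submodule ℂ h) (Dm : Submodule ℂ K2)
    (hD0 : Dense (D0 : Set h)) (hDm : Dense (Dm : Set K2))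
    (K : D0 →ₗ[ℂ] h) (L : D0 →ₗ[ℂ] K2) (M : Dm →ₗ[ℂ] h) (C : Dm →ₗ[ℂ] K2)
    (hform : ∀ (u : D0) (η : Dm),
      2 * (⟪(u : h), K u + M η⟫_ℂ + ⟪(η : K2), L u + C η - (η : K2)⟫_ℂ).re
        + ‖L u + C η - (η : K2)‖ ^ 2 = 0) :
    (∀ η : Dm, ‖C η‖ = ‖(η : K2)‖) ∧
      (∀ u : D0, ‖L u‖ ^ 2 + 2 * (⟪(u : h), K u⟫_ℂ).re = 0) ∧
      ∃ Cbar : K2 →L[ℂ] K2, ‖Cbar‖ ≤ 1 ∧ (∀ η : Dm, Cbar (η : K2) = C η) ∧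
        ∀ u : D0, ∃ hu : (u : h) ∈ (LinearPMap.adjoint (⟨Dm, M⟩ : K2 →ₗ.[ℂ] h)).domain,
          LinearPMap.adjoint (⟨Dm, M⟩ : K2 →ₗ.[ℂ] h) ⟨(u : h), hu⟩ =
            -(ContinuousLinearMap.adjoint Cbar (L u)) := by
  -- the pure-η equality
  have key1 : ∀ η : Dm, 2 * (⟪(η : K2), C η - (η : K2)⟫_ℂ).re
      + ‖C η - (η : K2)‖ ^ 2 = 0 := by
    intro η
    have := hform 0 η
    simpa using this
  -- the pure-u equality
  have key2 : ∀ u : D0, ‖L u‖ ^ 2 + 2 * (⟪(u : h), K u⟫_ℂ).re = 0 := by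
    intro u
    have := hform u 0
    simp at this
    linarith
  -- isometry of C
  have hiso : ∀ η : Dm, ‖C η‖ = ‖(η : K2)‖ := by
    intro η
    have h1 := key1 η
    have h2 : ‖C η - (η : K2)‖ ^ 2
        = ‖C η‖ ^ 2 - 2 * (⟪C η, (η : K2)⟫_ℂ).re + ‖(η : K2)‖ ^ 2 := by
      simpa using @norm_sub_sq ℂ K2 _ _ _ (C η) ((η : K2))
    have h3 : (⟪(η : K2), C η - (η : K2)⟫_ℂ).re
        = (⟪C η, (η : K2)⟫_ℂ).re - ‖(η : K2)‖ ^ 2 := by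
      rw [inner_sub_right, Complex.sub_re]
      congr 1
      · simpa using @inner_re_symm ℂ K2 _ _ _ ((η : K2)) (C η)
      · simpa using @inner_self_eq_norm_sq ℂ K2 _ _ _ ((η : K2))
    have hsq : ‖C η‖ ^ 2 = ‖(η : K2)‖ ^ 2 := by
      rw [h2, h3] at h1; ring_nf at h1 ⊢; linarith
    nlinarith [norm_nonneg (C η), norm_nonneg ((η : K2))]
  -- real part of the cross term
  have crossRe : ∀ (u : D0) (η : Dm),
      (⟪(u : h), M η⟫_ℂ).re + (⟪L u, C η⟫_ℂ).re = 0 := by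
    intro u η
    have hfe := hform u η
    have expand : ‖L u + C η - (η : K2)‖ ^ 2
        = ‖L u‖ ^ 2 + 2 * (⟪L u, C η - (η : K2)⟫_ℂ).re + ‖C η - (η : K2)‖ ^ 2 := by
      rw [add_sub_assoc]
      exact @norm_add_sq ℂ K2 _ _ _ (L u) (C η - (η : K2))
    have hsplit : (⟪(η : K2), L u + C η - (η : K2)⟫_ℂ).re
        = (⟪(η : K2), L u⟫_ℂ).re + (⟪(η : K2), C η - (η : K2)⟫_ℂ).re := by
      rw [add_sub_assoc, inner_add_right, Complex.add_re]
    have hsub : (⟪L u, C η - (η : K2)⟫_ℂ).re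
        = (⟪L u, C η⟫_ℂ).re - (⟪L u, (η : K2)⟫_ℂ).re := by
      rw [inner_sub_right, Complex.sub_re]
    have hsym : (⟪(η : K2), L u⟫_ℂ).re = (⟪L u, (η : K2)⟫_ℂ).re := by
      simpa using @inner_re_symm ℂ K2 _ _ _ ((η : K2)) (L u)
    have h1 := key1 η
    have h2 := key2 u
    rw [inner_add_right, Complex.add_re, Complex.add_re, hsplit, expand, hsub, hsym] at hfe
    linarith
  -- full cross term
  have cross : ∀ (u : D0) (η : Dm),
      ⟪(u : h), M η⟫_ℂ + ⟪L u, C η⟫_ℂ = 0 := by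
    intro u η
    have hre := crossRe u η
    have him := crossRe u (Complex.I • η)
    rw [map_smul, map_smul, inner_smul_right, inner_smul_right] at him
    simp only [Complex.mul_re, Complex.I_re, Complex.I_im, zero_mul, one_mul,
      zero_sub] at him
    apply Complex.ext
    · simpa using hre
    · simp only [Complex.add_re, Complex.add_im, Complex.zero_re, Complex.zero_im]
      linarith
  refine ⟨hiso, key2, ?_⟩
  -- construct the contractive extension of C
  have hbound : ∀ η : Dm, ‖C η‖ ≤ 1 * ‖η‖ := fun η => by
    rw [one_mul, hiso]; rfl
  set Ccont : Dm →L[ℂ] K2 := LinearMap.mkContinuous C 1 hbound with hCcont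
  have hdr : DenseRange (Dm.subtypeL : Dm →L[ℂ] K2) := hDm.denseRange_val
  have hbe : ∀ x : Dm, ‖x‖ ≤ (1 : NNReal) * ‖Dm.subtypeL x‖ := fun x => by
    simp [Submodule.subtypeL_apply]
  set Cbar : K2 →L[ℂ] K2 :=
    Ccont.extend Dm.subtypeL with hCbar
  have hagree : ∀ η : Dm, Cbar (η : K2) = C η := by
    intro η
    have := ContinuousLinearMap.extend_eq Ccont hdr
      (ContinuousLinearMap.isUniformEmbedding_of_bound _ hbe).isUniformInducing η
    exact this
  have hnorm : ‖Cbar‖ ≤ 1 := by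
    have h1 := ContinuousLinearMap.opNorm_extend_le Ccont hdr hbe
    have h2 : ‖Ccont‖ ≤ 1 := LinearMap.mkContinuous_norm_le C zero_le_one hbound
    calc ‖Cbar‖ ≤ (1 : NNReal) * ‖Ccont‖ := h1
      _ ≤ 1 := by simpa using h2
  refine ⟨Cbar, hnorm, hagree, ?_⟩
  intro u
  set T : K2 →ₗ.[ℂ] h := (⟨Dm, M⟩ : K2 →ₗ.[ℂ] h) with hT
  have hTdense : Dense (T.domain : Set K2) := hDm
  have hw : ∀ x : T.domain,
      ⟪-(ContinuousLinearMap.adjoint Cbar (L u)), (x : K2)⟫_ℂ = ⟪(u : h), T x⟫_ℂ := by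
    intro x
    rw [inner_neg_left, ContinuousLinearMap.adjoint_inner_left, hagree x]
    show -⟪L u, C x⟫_ℂ = ⟪(u : h), M x⟫_ℂ
    linear_combination -cross u x
  have hmem : (u : h) ∈ T.adjoint.domain :=
    LinearPMap.mem_adjoint_domain_of_exists _ ⟨_, hw⟩
  exact ⟨hmem, LinearPMap.adjoint_apply_eq hTdense ⟨(u : h), hmem⟩ hw⟩
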